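/- Let (X,d) be a compact metric space and f_{0,∞} = {f_n}_{n=0}^∞ a sequence of continuous self-maps of X such that f_n is surjective for every n ≥ 0. Then the induced system (𝓜(X), f̂_{0,∞}) is chain mixing. -/

import Mathlib

open MeasureTheory Filter

/-- `nacomp f n = f_{n-1} ∘ ⋯ ∘ f_0` (with `nacomp f 0 = id`): the time-`n` map of the
non-autonomous system `(X, f_{0,∞})`. -/
def nacomp {Y : Type*} (f : ℕ → Y → Y) : ℕ → Y → Y
  | 0 => id
  | n + 1 => f n ∘ nacomp f n

/-- The induced pushforward map `f̂` on the space `𝓜(X)` of Borel probability measures,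
equipped with the Lévy–Prokhorov metric. -/
noncomputable def inducedMap {X : Type*} [MetricSpace X] [MeasurableSpace X] [BorelSpace X]
    (f : X → X) (hf : Continuous f) :
    LevyProkhorov (ProbabilityMeasure X) → LevyProkhorov (ProbabilityMeasure X) :=
  fun μ => (LevyProkhorov.toMeasureEquiv (α := ProbabilityMeasure X)).symm
    (((LevyProkhorov.toMeasureEquiv (α := ProbabilityMeasure X)) μ).map hf.measurable.aemeasurable)

/-- An `δ`-chain of the non-autonomous system from `x` to `y` with length `k`. -/
def NAChain {Y : Type*} [PseudoMetricSpace Y] (f : ℕ → Y → Y) (δ : ℝ) (x y : Y) (k : ℕ) : Prop :=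
  ∃ c : ℕ → Y, c 0 = x ∧ c k = y ∧ ∀ i, i < k → dist (f i (c i)) (c (i + 1)) < δ

/-- Chain transitivity of the non-autonomous system given by the maps `f n`. -/
def NAChainTransitive {Y : Type*} [PseudoMetricSpace Y] (f : ℕ → Y → Y) : Prop :=
  ∀ x y : Y, ∀ ε : ℝ, 0 < ε → ∃ k, 1 ≤ k ∧ NAChain f ε x y k

/-- Chain mixing of the non-autonomous system given by the maps `f n`. -/
def NAChainMixing {Y : Type*} [PseudoMetricSpace Y] (f : ℕ → Y → Y) : Prop :=
  ∀ x y : Y, ∀ ε : ℝ, 0 < ε → ∃ N, 1 ≤ N ∧ ∀ k, N ≤ k → NAChain f ε x y k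

/-- Chain exactness of the non-autonomous system given by the maps `f n`. -/
def NAChainExact {Y : Type*} [PseudoMetricSpace Y] (f : ℕ → Y → Y) : Prop :=
  ∀ ε : ℝ, 0 < ε → ∀ U : Set Y, IsOpen U → U.Nonempty →
    ∃ N, 1 ≤ N ∧ ∀ x : Y, ∃ y ∈ U, NAChain f ε y x N

/-- Chain weak mixing of all orders: every finite product system (with the sup metric)
is chain transitive. -/
def NAChainWeakMixingAllOrders {Y : Type*} [PseudoMetricSpace Y] (f : ℕ → Y → Y) : Prop :=
  ∀ n, 1 ≤ n → NAChainTransitive (fun k (x : Fin n → Y) i => f k (x i))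

/-! ### Auxiliary lemmas -/

open Set Metric ENNReal

section Aux

variable {X : Type*} [MetricSpace X] [MeasurableSpace X] [BorelSpace X]

set_option linter.unusedSectionVars false

/-- A finite Borel partition of a compact metric space into pieces of radius `< r`. -/
lemma exists_fine_partition [CompactSpace X] [Nonempty X] {r : ℝ} (hr : 0 < r) :
    ∃ (m : ℕ) (B : ℕ → Set X) (x : ℕ → X),
      (∀ j, MeasurableSet (B j)) ∧ Pairwise (Function.onFun Disjoint B) ∧
      (⋃ j, B j) = Set.univ ∧ (∀ j, B j ⊆ Metric.ball (x j) r) ∧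
      (∀ j, m ≤ j → B j = ∅) := by
  obtain ⟨t, -, htf, hcov⟩ := finite_cover_balls_of_compact (isCompact_univ (X := X)) hr
  obtain ⟨n, e, hrange⟩ := htf.fin_embedding
  set x : ℕ → X := fun j => if h : j < n then e ⟨j, h⟩ else Classical.arbitrary X with hx
  set A : ℕ → Set X := fun j => if j < n then Metric.ball (x j) r else ∅ with hA
  have hAm : ∀ j, MeasurableSet (A j) := by
    intro j
    by_cases h : j < n <;> simp [hA, h, measurableSet_ball]
  refine ⟨n, disjointed A, x, fun j => MeasurableSet.disjointed hAm j,
    disjoint_disjointed A, ?_, ?_, ?_⟩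
  · rw [iUnion_disjointed]
    apply Set.eq_univ_of_univ_subset
    intro y hy
    obtain ⟨z, hzt, hz⟩ := Set.mem_iUnion₂.mp (hcov hy)
    rw [← hrange] at hzt
    obtain ⟨⟨j, hj⟩, rfl⟩ := hzt
    refine Set.mem_iUnion.mpr ⟨j, ?_⟩
    have : x j = e ⟨j, hj⟩ := by simp [hx, hj]
    simp only [hA, if_pos hj, this]
    exact hz
  · intro j
    refine (disjointed_subset A j).trans ?_
    by_cases h : j < n
    · simp [hA, h]
    · simp [hA, h]
  · intro j hj
    have : A j = ∅ := by simp [hA, Nat.not_lt.mpr hj]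
    exact Set.subset_empty_iff.mp (this ▸ disjointed_subset A j)

/-- Summing a measure over the pieces of a partition. -/
lemma sum_partition' {m : ℕ} {B : ℕ → Set X}
    (hmeas : ∀ j, MeasurableSet (B j)) (hdisj : Pairwise (Function.onFun Disjoint B))
    (hcover : (⋃ j, B j) = Set.univ) (hempty : ∀ j, m ≤ j → B j = ∅)
    (ρ : Measure X) {S : Set X} (hS : MeasurableSet S) :
    ∑ j ∈ Finset.range m, ρ (S ∩ B j) = ρ S := by
  have hU : S = ⋃ j, S ∩ B j := by
    rw [← Set.inter_iUnion, hcover, Set.inter_univ]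
  have hd : Pairwise (Function.onFun Disjoint fun j => S ∩ B j) :=
    hdisj.mono fun i j h => h.mono Set.inter_subset_right Set.inter_subset_right
  calc ∑ j ∈ Finset.range m, ρ (S ∩ B j) = ∑' j, ρ (S ∩ B j) := by
        refine (tsum_eq_sum ?_).symm
        intro j hj
        rw [hempty j (by simpa using hj)]
        simp
    _ = ρ (⋃ j, S ∩ B j) := (measure_iUnion hd fun j => hS.inter (hmeas j)).symm
    _ = ρ S := by rw [← hU]

/-- Changing the weight in a convex combination moves the Lévy–Prokhorov edistance by at most
the change of weight. -/
lemma lp_weight (ρ α : Measure X) [IsProbabilityMeasure ρ] [IsProbabilityMeasure α]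
    {s t : ℝ≥0∞} (hst : s ≤ t) (ht : t ≤ 1) :
    levyProkhorovEDist ((1 - s) • ρ + s • α) ((1 - t) • ρ + t • α) ≤ t - s := by
  apply levyProkhorovEDist_le_of_forall
  intro ε B hε hεtop hB
  have hε0 : (0 : ℝ≥0∞) < ε := lt_of_le_of_lt zero_le hε
  have hεr : 0 < ε.toReal := ENNReal.toReal_pos hε0.ne' hεtop.ne
  have hBT : B ⊆ thickening ε.toReal B := self_subset_thickening hεr B
  have h1 : (1 : ℝ≥0∞) - s = (1 - t) + (t - s) := (tsub_add_tsub_cancel ht hst).symm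
  have hts : t = s + (t - s) := (add_tsub_cancel_of_le hst).symm
  have key1 : ∀ S : Set X, ((1 - s) • ρ + s • α) S ≤ ((1 - t) • ρ + t • α) S + (t - s) := by
    intro S
    simp only [Measure.coe_add, Pi.add_apply, Measure.coe_smul, Pi.smul_apply, smul_eq_mul]
    calc (1 - s) * ρ S + s * α S
        = ((1 - t) * ρ S + (t - s) * ρ S) + s * α S := by rw [h1, add_mul]
      _ ≤ ((1 - t) * ρ S + (t - s) * 1) + t * α S := by
          gcongr
          exact prob_le_one
      _ = ((1 - t) * ρ S + t * α S) + (t - s) := by ring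
  have key2 : ∀ S : Set X, ((1 - t) • ρ + t • α) S ≤ ((1 - s) • ρ + s • α) S + (t - s) := by
    intro S
    simp only [Measure.coe_add, Pi.add_apply, Measure.coe_smul, Pi.smul_apply, smul_eq_mul]
    calc (1 - t) * ρ S + t * α S
        = (1 - t) * ρ S + (s * α S + (t - s) * α S) := by
          congr 1
          rw [← add_mul, ← hts]
      _ ≤ (1 - s) * ρ S + (s * α S + (t - s) * 1) := by
          gcongr ?_ * ρ S + (s * α S + (t - s) * ?_)
          · exact tsub_le_tsub_left hst 1
          · exact prob_le_one
      _ = ((1 - s) * ρ S + s * α S) + (t - s) := by ring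
  constructor
  · calc ((1 - s) • ρ + s • α) B ≤ ((1 - t) • ρ + t • α) B + (t - s) := key1 B
      _ ≤ ((1 - t) • ρ + t • α) (thickening ε.toReal B) + ε :=
          add_le_add (measure_mono hBT) hε.le
  · calc ((1 - t) • ρ + t • α) B ≤ ((1 - s) • ρ + s • α) B + (t - s) := key2 B
      _ ≤ ((1 - s) • ρ + s • α) (thickening ε.toReal B) + ε :=
          add_le_add (measure_mono hBT) hε.le

/-- Changing one component of a convex combination moves the Lévy–Prokhorov edistance by
at most the edistance of the components. -/
lemma lp_comp (ρ α β : Measure X) {c t : ℝ≥0∞} (ht : t ≤ 1) :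
    levyProkhorovEDist (c • ρ + t • α) (c • ρ + t • β) ≤ levyProkhorovEDist α β := by
  apply levyProkhorovEDist_le_of_forall
  intro ε B hε hεtop hB
  have hε0 : (0 : ℝ≥0∞) < ε := lt_of_le_of_lt zero_le hε
  have hεr : 0 < ε.toReal := ENNReal.toReal_pos hε0.ne' hεtop.ne
  have hBT : B ⊆ thickening ε.toReal B := self_subset_thickening hεr B
  have hαβ := left_measure_le_of_levyProkhorovEDist_lt hε hB (μ := α) (ν := β)
  have hβα := right_measure_le_of_levyProkhorovEDist_lt hε hB (μ := α) (ν := β)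
  constructor
  · simp only [Measure.coe_add, Pi.add_apply, Measure.coe_smul, Pi.smul_apply, smul_eq_mul]
    calc c * ρ B + t * α B
        ≤ c * ρ (thickening ε.toReal B) + t * (β (thickening ε.toReal B) + ε) := by
          gcongr <;> first | exact measure_mono hBT | exact hαβ
      _ = c * ρ (thickening ε.toReal B) + t * β (thickening ε.toReal B) + t * ε := by ring
      _ ≤ c * ρ (thickening ε.toReal B) + t * β (thickening ε.toReal B) + ε := by
          gcongr
          exact mul_le_of_le_one_left zero_le ht
  · simp only [Measure.coe_add, Pi.add_apply, Measure.coe_smul, Pi.smul_apply, smul_eq_mul]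
    calc c * ρ B + t * β B
        ≤ c * ρ (thickening ε.toReal B) + t * (α (thickening ε.toReal B) + ε) := by
          gcongr <;> first | exact measure_mono hBT | exact hβα
      _ = c * ρ (thickening ε.toReal B) + t * α (thickening ε.toReal B) + t * ε := by ring
      _ ≤ c * ρ (thickening ε.toReal B) + t * α (thickening ε.toReal B) + ε := by
          gcongr
          exact mul_le_of_le_one_left zero_le ht

/-- The discretization of a measure along a fine partition is Lévy–Prokhorov close to it. -/
lemma lp_discret {m : ℕ} {B : ℕ → Set X} {x : ℕ → X} {r : ℝ} (hr : 0 < r)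
    (hmeas : ∀ j, MeasurableSet (B j)) (hdisj : Pairwise (Function.onFun Disjoint B))
    (hcover : (⋃ j, B j) = Set.univ) (hball : ∀ j, B j ⊆ Metric.ball (x j) r)
    (hempty : ∀ j, m ≤ j → B j = ∅) (ρ : Measure X) :
    levyProkhorovEDist (∑ j ∈ Finset.range m, ρ (B j) • Measure.dirac (x j)) ρ
      ≤ ENNReal.ofReal r := by
  apply levyProkhorovEDist_le_of_forall
  intro ε S hε hεtop hS
  have hrε : r < ε.toReal := by
    rw [← ENNReal.ofReal_lt_iff_lt_toReal hr.le hεtop.ne]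
    exact hε
  set T := thickening ε.toReal S with hT
  have hTm : MeasurableSet T := isOpen_thickening.measurableSet
  constructor
  · rw [Measure.finset_sum_apply]
    have step : ∀ j, (ρ (B j) • Measure.dirac (x j)) S ≤ ρ (T ∩ B j) := by
      intro j
      rw [Measure.smul_apply, smul_eq_mul, Measure.dirac_apply' _ hS]
      by_cases hx : x j ∈ S
      · have hsub : B j ⊆ T := by
          intro y hy
          rw [hT, mem_thickening_iff]
          exact ⟨x j, hx, lt_trans ((mem_ball.mp (hball j hy))) hrε⟩
        rw [Set.indicator_of_mem hx, Pi.one_apply, mul_one]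
        exact measure_mono fun y hy => ⟨hsub hy, hy⟩
      · rw [Set.indicator_of_notMem hx, mul_zero]
        exact zero_le
    calc ∑ j ∈ Finset.range m, (ρ (B j) • Measure.dirac (x j)) S
        ≤ ∑ j ∈ Finset.range m, ρ (T ∩ B j) := Finset.sum_le_sum fun j _ => step j
      _ = ρ T := sum_partition' hmeas hdisj hcover hempty ρ hTm
      _ ≤ ρ T + ε := le_self_add
  · have step : ∀ j, ρ (S ∩ B j) ≤ (ρ (B j) • Measure.dirac (x j)) T := by
      intro j
      rw [Measure.smul_apply, smul_eq_mul, Measure.dirac_apply' _ hTm]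
      rcases Set.eq_empty_or_nonempty (S ∩ B j) with h | ⟨y, hyS, hyB⟩
      · rw [h]; simp
      · have hxT : x j ∈ T := by
          rw [hT, mem_thickening_iff]
          exact ⟨y, hyS, by
            rw [dist_comm]
            exact lt_trans (mem_ball.mp (hball j hyB)) hrε⟩
        rw [Set.indicator_of_mem hxT, Pi.one_apply, mul_one]
        exact measure_mono Set.inter_subset_right
    calc ρ S = ∑ j ∈ Finset.range m, ρ (S ∩ B j) :=
          (sum_partition' hmeas hdisj hcover hempty ρ hS).symm
      _ ≤ ∑ j ∈ Finset.range m, (ρ (B j) • Measure.dirac (x j)) T :=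
          Finset.sum_le_sum fun j _ => step j
      _ ≤ (∑ j ∈ Finset.range m, ρ (B j) • Measure.dirac (x j)) T + ε :=
          le_trans (Measure.finset_sum_apply (Finset.range m)
            (fun j => ρ (B j) • Measure.dirac (x j)) T).symm.le le_self_add

/-- Pushing forward a finite sum of measures. -/
lemma map_finset_sum' {ι : Type*} (s : Finset ι) (μ : ι → Measure X) {φ : X → X}
    (hφ : Measurable φ) : (∑ j ∈ s, μ j).map φ = ∑ j ∈ s, (μ j).map φ := by
  classical
  induction s using Finset.induction_on with
  | empty => simp
  | @insert a s ha ih =>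
      rw [Finset.sum_insert ha, Finset.sum_insert ha, Measure.map_add _ _ hφ, ih]

end Aux

/-- If every `f_n` is surjective, then the induced system `(𝓜(X), f̂_{0,∞})` is chain mixing. -/
theorem induced_chainMixing_of_surjective
    {X : Type*} [MetricSpace X] [CompactSpace X] [MeasurableSpace X] [BorelSpace X]
    (f : ℕ → X → X) (hf : ∀ n, Continuous (f n)) (hsurj : ∀ n, Function.Surjective (f n)) :
    NAChainMixing (fun n => inducedMap (f n) (hf n)) := by
  intro μ ν ε hε
  -- the space is nonempty since it carries a probability measure
  have hX : Nonempty X := by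
    by_contra h
    rw [not_nonempty_iff] at h
    have h1 : ((LevyProkhorov.toMeasureEquiv (α := ProbabilityMeasure X)) μ : Measure X) Set.univ = 1 :=
      measure_univ
    rw [Set.univ_eq_empty_iff.mpr h] at h1
    simp at h1
  obtain ⟨N₀, hN₀⟩ := exists_nat_gt (2 / ε)
  refine ⟨max N₀ 1, le_max_right _ _, fun k hk => ?_⟩
  have hk1 : 1 ≤ k := le_trans (le_max_right _ _) hk
  have hk0 : (k : ℝ≥0∞) ≠ 0 := Nat.cast_ne_zero.mpr (Nat.one_le_iff_ne_zero.mp hk1)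
  have hkRpos : (0 : ℝ) < k := by exact_mod_cast hk1
  have hkR : 2 / ε < (k : ℝ) :=
    lt_of_lt_of_le hN₀ (by exact_mod_cast le_trans (le_max_left _ _) hk)
  have hinv : (k : ℝ)⁻¹ < ε / 2 := by
    have h2 : (0 : ℝ) < 2 / ε := by positivity
    rw [← one_div]
    calc 1 / (k : ℝ) < 1 / (2 / ε) := one_div_lt_one_div_of_lt h2 hkR
      _ = ε / 2 := one_div_div 2 ε
  obtain ⟨m, B, x, hmeas, hdisj, hcover, hball, hBempty⟩ :=
    exists_fine_partition (X := X) (half_pos hε)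
  set μ0 : Measure X := ((LevyProkhorov.toMeasureEquiv (α := ProbabilityMeasure X)) μ : Measure X) with hμ0
  set ν0 : Measure X := ((LevyProkhorov.toMeasureEquiv (α := ProbabilityMeasure X)) ν : Measure X) with hν0
  haveI hμp : IsProbabilityMeasure μ0 := ((LevyProkhorov.toMeasureEquiv (α := ProbabilityMeasure X)) μ).2
  haveI hνp : IsProbabilityMeasure ν0 := ((LevyProkhorov.toMeasureEquiv (α := ProbabilityMeasure X)) ν).2
  set g : ℕ → X → X := fun n => Function.surjInv (hsurj n) with hgdef
  have hg : ∀ n y, f n (g n y) = y := fun n y => Function.surjInv_eq (hsurj n) y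
  set Dm : Measure X → Measure X :=
    fun ρ => ∑ j ∈ Finset.range m, ρ (B j) • Measure.dirac (x j) with hDm
  set pre : ℕ → Measure X → Measure X :=
    fun n ρ => ∑ j ∈ Finset.range m, ρ (B j) • Measure.dirac (g n (x j)) with hpre
  have hmap_pre : ∀ n ρ, (pre n ρ).map (f n) = Dm ρ := by
    intro n ρ
    rw [hpre, hDm]
    rw [map_finset_sum' _ _ (hf n).measurable]
    refine Finset.sum_congr rfl fun j _ => ?_
    rw [Measure.map_smul, Measure.map_dirac' (hf n).measurable, hg]
  have hprob_sum : ∀ (ρ : Measure X) (y : ℕ → X), IsProbabilityMeasure ρ →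
      IsProbabilityMeasure (∑ j ∈ Finset.range m, ρ (B j) • Measure.dirac (y j)) := by
    intro ρ y hρ
    constructor
    rw [Measure.finset_sum_apply]
    have hterm : ∀ j, (ρ (B j) • Measure.dirac (y j)) Set.univ = ρ (Set.univ ∩ B j) := by
      intro j
      rw [Measure.smul_apply, smul_eq_mul, measure_univ, mul_one, Set.univ_inter]
    simp_rw [hterm]
    rw [sum_partition' hmeas hdisj hcover hBempty ρ MeasurableSet.univ]
    exact hρ.measure_univ
  set u : ℕ → Measure X := fun i => Nat.rec μ0 (fun i acc => acc.map (f i)) i with hu_def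
  set w : ℕ → Measure X := fun j => Nat.rec ν0 (fun j acc => pre (k - j - 1) acc) j with hw_def
  have hu_succ : ∀ i, u (i + 1) = (u i).map (f i) := fun i => rfl
  have hw_succ : ∀ j, w (j + 1) = pre (k - j - 1) (w j) := fun j => rfl
  have hu : ∀ i, IsProbabilityMeasure (u i) := by
    intro i
    induction i with
    | zero => exact hμp
    | succ i ih =>
        rw [hu_succ i]
        exact MeasureTheory.Measure.isProbabilityMeasure_map (μ := u i) (hf i).measurable.aemeasurable
  have hw : ∀ j, IsProbabilityMeasure (w j) := by
    intro j
    induction j with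
    | zero => exact hνp
    | succ j ih =>
        rw [hw_succ j, hpre]
        exact hprob_sum _ _ ih
  set t : ℕ → ℝ≥0∞ := fun i => min ((i : ℝ≥0∞) / (k : ℝ≥0∞)) 1 with htdef
  have ht1 : ∀ i, t i ≤ 1 := fun i => min_le_right _ _
  have hteq : ∀ i, i ≤ k → t i = (i : ℝ≥0∞) / (k : ℝ≥0∞) := by
    intro i hik
    apply min_eq_left
    calc (i : ℝ≥0∞) / (k : ℝ≥0∞) ≤ (k : ℝ≥0∞) / (k : ℝ≥0∞) := by
          gcongr
          try exact_mod_cast hik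
      _ = 1 := ENNReal.div_self hk0 (natCast_ne_top k)
  set C : ℕ → Measure X := fun i => (1 - t i) • u i + t i • w (k - i) with hCdef
  have hC : ∀ i, IsProbabilityMeasure (C i) := by
    intro i
    haveI := hu i
    haveI := hw (k - i)
    constructor
    simp only [hCdef, Measure.coe_add, Pi.add_apply, Measure.coe_smul, Pi.smul_apply,
      smul_eq_mul, measure_univ, mul_one]
    exact tsub_add_cancel_of_le (ht1 i)
  set c : ℕ → LevyProkhorov (ProbabilityMeasure X) :=
    fun i => (LevyProkhorov.toMeasureEquiv (α := ProbabilityMeasure X)).symm ⟨C i, hC i⟩ with hcdef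
  refine ⟨c, ?_, ?_, ?_⟩
  · -- c 0 = μ
    have ht0 : t 0 = 0 := by simp [htdef]
    have h0 : C 0 = μ0 := by
      rw [hCdef]
      simp only [ht0, tsub_zero, one_smul, zero_smul, add_zero]
      rfl
    show (LevyProkhorov.toMeasureEquiv (α := ProbabilityMeasure X)).symm ⟨C 0, hC 0⟩ = μ
    rw [show (⟨C 0, hC 0⟩ : ProbabilityMeasure X) = (LevyProkhorov.toMeasureEquiv (α := ProbabilityMeasure X)) μ
      from Subtype.ext h0]
    exact Equiv.symm_apply_apply _ μ
  · -- c k = ν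
    have htk : t k = 1 := by
      rw [hteq k le_rfl, ENNReal.div_self hk0 (natCast_ne_top k)]
    have h0 : C k = ν0 := by
      rw [hCdef]
      simp only [htk, tsub_self, zero_smul, one_smul, zero_add, Nat.sub_self]
      rfl
    show (LevyProkhorov.toMeasureEquiv (α := ProbabilityMeasure X)).symm ⟨C k, hC k⟩ = ν
    rw [show (⟨C k, hC k⟩ : ProbabilityMeasure X) = (LevyProkhorov.toMeasureEquiv (α := ProbabilityMeasure X)) ν
      from Subtype.ext h0]
    exact Equiv.symm_apply_apply _ ν
  · -- the chain steps
    intro i hi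
    have hik : i + 1 ≤ k := hi
    have hwi : w (k - i) = pre i (w (k - (i + 1))) := by
      have h1 : k - i = (k - (i + 1)) + 1 := by omega
      rw [h1, hw_succ]
      congr 2
      omega
    have hmapC : (C i).map (f i) =
        (1 - t i) • u (i + 1) + t i • Dm (w (k - (i + 1))) := by
      rw [hCdef]
      rw [Measure.map_add _ _ (hf i).measurable, Measure.map_smul, Measure.map_smul,
        ← hu_succ i, hwi, hmap_pre]
    haveI hA : IsProbabilityMeasure (u (i + 1)) := hu (i + 1)
    haveI hW : IsProbabilityMeasure (w (k - (i + 1))) := hw (k - (i + 1))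
    have hdist : dist ((fun n => inducedMap (f n) (hf n)) i (c i)) (c (i + 1)) =
        (levyProkhorovEDist ((C i).map (f i)) (C (i + 1))).toReal := rfl
    rw [hdist]
    have hmono : t i ≤ t (i + 1) := by
      rw [hteq i (Nat.le_of_lt hi), hteq (i + 1) hik]
      gcongr
      exact_mod_cast Nat.le_succ i
    have hstep : t (i + 1) - t i ≤ (k : ℝ≥0∞)⁻¹ := by
      rw [hteq i (Nat.le_of_lt hi), hteq (i + 1) hik, Nat.cast_add, Nat.cast_one,
        ENNReal.add_div, ENNReal.add_sub_cancel_left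
          (ne_of_lt (ENNReal.div_lt_top (natCast_ne_top i) hk0)), one_div]
    have htri : levyProkhorovEDist ((C i).map (f i)) (C (i + 1)) ≤
        ENNReal.ofReal (ε / 2) + (k : ℝ≥0∞)⁻¹ := by
      have hC1 : C (i + 1) = (1 - t (i + 1)) • u (i + 1) + t (i + 1) • w (k - (i + 1)) := rfl
      rw [hmapC, hC1]
      have h1 : levyProkhorovEDist
          ((1 - t i) • u (i + 1) + t i • Dm (w (k - (i + 1))))
          ((1 - t i) • u (i + 1) + t i • w (k - (i + 1))) ≤ ENNReal.ofReal (ε / 2) :=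
        le_trans (lp_comp (u (i + 1)) (Dm (w (k - (i + 1)))) (w (k - (i + 1))) (ht1 i))
          (lp_discret (half_pos hε) hmeas hdisj hcover hball hBempty (w (k - (i + 1))))
      have h2 : levyProkhorovEDist
          ((1 - t i) • u (i + 1) + t i • w (k - (i + 1)))
          ((1 - t (i + 1)) • u (i + 1) + t (i + 1) • w (k - (i + 1))) ≤ (k : ℝ≥0∞)⁻¹ :=
        le_trans (lp_weight (u (i + 1)) (w (k - (i + 1))) hmono (ht1 (i + 1))) hstep
      exact le_trans (levyProkhorovEDist_triangle _ _ _) (add_le_add h1 h2)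
    have hlt : ENNReal.ofReal (ε / 2) + (k : ℝ≥0∞)⁻¹ < ENNReal.ofReal ε := by
      have hkinv : (k : ℝ≥0∞)⁻¹ < ENNReal.ofReal (ε / 2) := by
        rw [show ((k : ℕ) : ℝ≥0∞) = ENNReal.ofReal ((k : ℕ) : ℝ) from
          (ENNReal.ofReal_natCast k).symm, ← ENNReal.ofReal_inv_of_pos hkRpos]
        exact (ENNReal.ofReal_lt_ofReal_iff (half_pos hε)).mpr hinv
      calc ENNReal.ofReal (ε / 2) + (k : ℝ≥0∞)⁻¹
          < ENNReal.ofReal (ε / 2) + ENNReal.ofReal (ε / 2) :=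
            ENNReal.add_lt_add_left ENNReal.ofReal_ne_top hkinv
        _ = ENNReal.ofReal ε := by
            rw [← ENNReal.ofReal_add (by positivity) (by positivity)]
            norm_num
    have hfin := lt_of_le_of_lt htri hlt
    calc (levyProkhorovEDist ((C i).map (f i)) (C (i + 1))).toReal
        < (ENNReal.ofReal ε).toReal :=
          ENNReal.toReal_strict_mono ENNReal.ofReal_ne_top hfin
      _ = ε := ENNReal.toReal_ofReal hε.le
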